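/- (Proposition 3.4, case s = 1.) Assume the Mecke identity with Papangelou intensity r, and assume j : X → [0,∞) is measurable with r(x,γ) ≤ j(x) for all x ∈ X and γ ∈ Γ and ∫_Λ j dν < ∞ for every Λ ∈ B₀(X). Then for every Λ ∈ B₀(X) both functions γ ↦ ∑_{x∈γ∩Λ} 𝟙{r(x,γ\{x})>0} and γ ↦ ∫_Λ r(x,γ) ν(dx) are square-integrable with respect to μ. -/

import Mathlib

open MeasureTheory Set ENNReal Filter Topology

noncomputable section

/-- The configuration space over `X`: the set of all locally finite subsets of `X`. -/
def Config (X : Type*) [TopologicalSpace X] : Type _ :=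
  {γ : Set X // ∀ K : Set X, IsCompact K → (γ ∩ K).Finite}

namespace Config

variable {X : Type*} [TopologicalSpace X]

/-- Removal of a point from a configuration, `γ \ {x}`. -/
def erase (γ : Config X) (x : X) : Config X :=
  ⟨γ.1 \ {x}, fun K hK => (γ.2 K hK).subset fun _ hz => ⟨hz.1.1, hz.2⟩⟩

/-- Insertion of a point into a configuration, `γ ∪ {x}`. -/
def ins (γ : Config X) (x : X) : Config X :=
  ⟨insert x γ.1, fun K hK => ((γ.2 K hK).insert x).subset (by
    rintro z ⟨hz1, hz2⟩
    rcases Set.mem_insert_iff.mp hz1 with rfl | h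
    · exact Set.mem_insert _ _
    · exact Set.mem_insert_of_mem _ ⟨h, hz2⟩)⟩

end Config

variable {X : Type*} [TopologicalSpace X]

/-- Cylinder functions `FC_b`: `F(γ) = g(⟨φ₁,γ⟩, …, ⟨φ_N,γ⟩)` with the `φᵢ` continuous
with compact support and `g` bounded continuous; here `⟨φ,γ⟩ = ∑_{x∈γ} φ(x)`. -/
def IsCylinder (F : Config X → ℝ) : Prop :=
  ∃ (N : ℕ) (φ : Fin N → X → ℝ) (g : (Fin N → ℝ) → ℝ),
    (∀ i, Continuous (φ i)) ∧ (∀ i, HasCompactSupport (φ i)) ∧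
      Continuous g ∧ (∃ C : ℝ, ∀ v, |g v| ≤ C) ∧
      ∀ γ : Config X, F γ = g fun i => ∑' x : γ.1, φ i x

/-- `(D_x^- F)(γ) = F(γ \ {x}) - F(γ)`. -/
def Dm (F : Config X → ℝ) (x : X) (γ : Config X) : ℝ := F (γ.erase x) - F γ

/-- `(D_x^+ F)(γ) = F(γ ∪ {x}) - F(γ)`. -/
def Dp (F : Config X → ℝ) (x : X) (γ : Config X) : ℝ := F (γ.ins x) - F γ

/-- `(D_{xy}^{-+} F)(γ) = F((γ \ {x}) ∪ {y}) - F(γ)`. -/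
def Dpm (F : Config X → ℝ) (x y : X) (γ : Config X) : ℝ := F ((γ.erase x).ins y) - F γ

variable [MeasurableSpace X]

/-- `Λ ∈ B₀(X)`: a relatively compact Borel set. -/
def IsB0 (Λ : Set X) : Prop := MeasurableSet Λ ∧ IsCompact (closure Λ)

/-- The σ-algebra on `Config X` generated by the counting maps `γ ↦ |γ ∩ Λ|`, `Λ ∈ B₀(X)`. -/
instance : MeasurableSpace (Config X) :=
  ⨆ (Λ : Set X) (_ : IsB0 Λ),
    MeasurableSpace.comap (fun γ : Config X => (γ.1 ∩ Λ).ncard) ⊤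

/-- The Mecke identity: `r` is a Papangelou intensity for `μ`, i.e.
`∫ ∑_{x∈γ} H(x,γ) μ(dγ) = ∫ ∫ r(x,γ) H(x,γ∪{x}) ν(dx) μ(dγ)` for measurable `H ≥ 0`. -/
def MeckeIdentity (ν : Measure X) (μ : Measure (Config X)) (r : X → Config X → ℝ) : Prop :=
  ∀ H : X → Config X → ℝ≥0∞, Measurable (fun p : X × Config X => H p.1 p.2) →
    ∫⁻ γ, ∑' x : γ.1, H (x : X) γ ∂μ =
      ∫⁻ γ, ∫⁻ x, ENNReal.ofReal (r x γ) * H x (γ.ins x) ∂ν ∂μ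

/-- Condition (G1): `∫ ∑_{x∈γ∩Λ} d(x,γ\{x}) μ(dγ) < ∞` for every `Λ ∈ B₀(X)`. -/
def CondG1 (μ : Measure (Config X)) (d : X → Config X → ℝ) : Prop :=
  ∀ Λ : Set X, IsB0 Λ →
    ∫⁻ γ, ∑' x : ↥(γ.1 ∩ Λ), ENNReal.ofReal (d (x : X) (γ.erase (x : X))) ∂μ < ⊤

/-- Condition (K1): `∫ ∑_{x∈γ} ∫ c(x,y,γ\{x})(χ_Λ(x)+χ_Λ(y)) ν(dy) μ(dγ) < ∞`
for every `Λ ∈ B₀(X)`. -/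
def CondK1 (ν : Measure X) (μ : Measure (Config X)) (c : X → X → Config X → ℝ) : Prop :=
  ∀ Λ : Set X, IsB0 Λ →
    ∫⁻ γ, ∑' x : γ.1, ∫⁻ y,
        ENNReal.ofReal (c (x : X) y (γ.erase (x : X))) *
          (Λ.indicator (1 : X → ℝ≥0∞) (x : X) + Λ.indicator (1 : X → ℝ≥0∞) y) ∂ν ∂μ < ⊤

/-- The Glauber Dirichlet form `ℰ_G(F,G)`. -/
def glauberE (μ : Measure (Config X)) (d : X → Config X → ℝ) (F G : Config X → ℝ) : ℝ :=
  ∫ γ, (∑' x : γ.1, d (x : X) (γ.erase (x : X)) * Dm F (x : X) γ * Dm G (x : X) γ) ∂μ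

/-- The Kawasaki Dirichlet form `ℰ_K(F,G)`. -/
def kawasakiE (ν : Measure X) (μ : Measure (Config X)) (c : X → X → Config X → ℝ)
    (F G : Config X → ℝ) : ℝ :=
  ∫ γ, (∑' x : γ.1, ∫ y, c (x : X) y (γ.erase (x : X)) * Dpm F (x : X) y γ *
    Dpm G (x : X) y γ ∂ν) ∂μ

/-- Proposition 3.4, case `s = 1`: both `γ ↦ ∑_{x∈γ∩Λ} 𝟙{r(x,γ\{x})>0}` and
`γ ↦ ∫_Λ r(x,γ) ν(dx)` are square-integrable with respect to `μ` for every
`Λ ∈ B₀(X)`. -/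
lemma cnt_measurable {X : Type*} [TopologicalSpace X] [MeasurableSpace X]
    (Λ : Set X) (hΛ : IsB0 Λ) :
    Measurable (fun γ : Config X => ((γ.1 ∩ Λ).ncard : ℝ≥0∞)) := by
  have h1 : Measurable (fun γ : Config X => (γ.1 ∩ Λ).ncard) := by
    rw [measurable_iff_comap_le]
    exact le_iSup₂ (f := fun (Λ : Set X) (_ : IsB0 Λ) =>
      MeasurableSpace.comap (fun γ : Config X => (γ.1 ∩ Λ).ncard) ⊤) Λ hΛ
  exact measurable_from_top.comp h1

lemma fin_inter {X : Type*} [TopologicalSpace X] [MeasurableSpace X]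
    (Λ : Set X) (hΛ : IsB0 Λ) (γ : Config X) : (γ.1 ∩ Λ).Finite :=
  (γ.2 (closure Λ) hΛ.2).subset (Set.inter_subset_inter_right _ subset_closure)

lemma tsum_indicator_eq_cnt {X : Type*} [TopologicalSpace X] [MeasurableSpace X]
    (Λ : Set X) (hΛ : IsB0 Λ) (γ : Config X) :
    ∑' x : γ.1, Λ.indicator (1 : X → ℝ≥0∞) x = ((γ.1 ∩ Λ).ncard : ℝ≥0∞) := by
  have hfin := fin_inter Λ hΛ γ
  rw [tsum_subtype, Set.indicator_indicator, ← tsum_subtype]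
  have := hfin.fintype
  rw [tsum_fintype]
  simp only [Pi.one_apply, Finset.sum_const, Finset.card_univ, nsmul_eq_mul, mul_one,
    Set.ncard_eq_toFinset_card', Set.toFinset_card]

lemma cnt_ins_le {X : Type*} [TopologicalSpace X] [MeasurableSpace X]
    (Λ : Set X) (hΛ : IsB0 Λ) (γ : Config X) (x : X) :
    ((((γ.ins x).1 ∩ Λ).ncard : ℝ≥0∞)) ≤ ((γ.1 ∩ Λ).ncard : ℝ≥0∞) + 1 := by
  have hfin := fin_inter Λ hΛ γ
  have h1 : ((γ.ins x).1 ∩ Λ).ncard ≤ (γ.1 ∩ Λ).ncard + 1 := by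
    calc ((γ.ins x).1 ∩ Λ).ncard ≤ (insert x (γ.1 ∩ Λ)).ncard := by
          apply Set.ncard_le_ncard _ (hfin.insert x)
          rintro z ⟨hz1, hz2⟩
          rcases Set.mem_insert_iff.mp hz1 with rfl | h
          · exact Set.mem_insert _ _
          · exact Set.mem_insert_of_mem _ ⟨h, hz2⟩
      _ ≤ (γ.1 ∩ Λ).ncard + 1 := Set.ncard_insert_le _ _
  exact_mod_cast h1
lemma tsum_one_eq_cnt {X : Type*} [TopologicalSpace X] [MeasurableSpace X]
    (Λ : Set X) (hΛ : IsB0 Λ) (γ : Config X) :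
    ∑' _ : ↥(γ.1 ∩ Λ), (1 : ℝ≥0∞) = ((γ.1 ∩ Λ).ncard : ℝ≥0∞) := by
  have := (fin_inter Λ hΛ γ).fintype
  rw [tsum_fintype]
  simp only [Pi.one_apply, Finset.sum_const, Finset.card_univ, nsmul_eq_mul, mul_one,
    Set.ncard_eq_toFinset_card', Set.toFinset_card]
theorem example_death_rate_square_integrable {X : Type*} [TopologicalSpace X]
    [LocallyCompactSpace X] [SecondCountableTopology X] [T2Space X]
    [MeasurableSpace X] [BorelSpace X]
    (ν : Measure X) [ν.Regular] [NullSingletonClass ν]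
    (μ : Measure (Config X)) [IsProbabilityMeasure μ]
    (r : X → Config X → ℝ) (hr0 : ∀ x γ, 0 ≤ r x γ)
    (hrm : Measurable fun p : X × Config X => r p.1 p.2)
    (hMecke : MeckeIdentity ν μ r)
    (j : X → ℝ) (hj0 : ∀ x, 0 ≤ j x) (hjm : Measurable j)
    (hrj : ∀ x γ, r x γ ≤ j x)
    (hjint : ∀ Λ : Set X, IsB0 Λ → ∫⁻ x in Λ, ENNReal.ofReal (j x) ∂ν < ⊤) :
    ∀ Λ : Set X, IsB0 Λ →
      (∫⁻ γ, (∑' x : ↥(γ.1 ∩ Λ),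
          (if 0 < r (x : X) (γ.erase (x : X)) then (1 : ℝ≥0∞) else 0)) ^ 2 ∂μ < ⊤) ∧
        ∫⁻ γ, (∫⁻ x in Λ, ENNReal.ofReal (r x γ) ∂ν) ^ 2 ∂μ < ⊤ := by
  intro Λ hΛ
  set C : ℝ≥0∞ := ∫⁻ x in Λ, ENNReal.ofReal (j x) ∂ν with hCdef
  have hC : C < ⊤ := hjint Λ hΛ
  set cnt : Config X → ℝ≥0∞ := fun γ => ((γ.1 ∩ Λ).ncard : ℝ≥0∞) with hcnt
  -- pointwise bound for the r-integrand
  have hpt : ∀ (x : X) (γ : Config X),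
      ENNReal.ofReal (r x γ) * Λ.indicator (1 : X → ℝ≥0∞) x ≤
        Λ.indicator (fun x => ENNReal.ofReal (j x)) x := by
    intro x γ
    by_cases h : x ∈ Λ
    · simp [Set.indicator_of_mem, h, ENNReal.ofReal_le_ofReal (hrj x γ)]
    · simp [Set.indicator_of_notMem, h]
  have hindint : ∫⁻ x, Λ.indicator (fun x => ENNReal.ofReal (j x)) x ∂ν = C := by
    rw [lintegral_indicator hΛ.1]
  -- Step A : ∫ cnt ≤ C
  have hA : ∫⁻ γ, cnt γ ∂μ ≤ C := by
    have hm : Measurable (fun p : X × Config X => Λ.indicator (1 : X → ℝ≥0∞) p.1) :=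
      (measurable_one.indicator hΛ.1).comp measurable_fst
    have hM := hMecke (fun x _ => Λ.indicator (1 : X → ℝ≥0∞) x) hm
    have hL : ∫⁻ γ, ∑' x : γ.1, Λ.indicator (1 : X → ℝ≥0∞) (x : X) ∂μ
        = ∫⁻ γ, cnt γ ∂μ := lintegral_congr fun γ => tsum_indicator_eq_cnt Λ hΛ γ
    rw [hL] at hM
    rw [hM]
    calc ∫⁻ γ, ∫⁻ x, ENNReal.ofReal (r x γ) * Λ.indicator (1 : X → ℝ≥0∞) x ∂ν ∂μ
        ≤ ∫⁻ γ, C ∂μ := by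
          refine lintegral_mono fun γ => ?_
          calc ∫⁻ x, ENNReal.ofReal (r x γ) * Λ.indicator (1 : X → ℝ≥0∞) x ∂ν
              ≤ ∫⁻ x, Λ.indicator (fun x => ENNReal.ofReal (j x)) x ∂ν :=
                lintegral_mono fun x => hpt x γ
            _ = C := hindint
      _ = C := by simp
  -- Step B : ∫ cnt^2 ≤ C * (C + 1)
  have hB : ∫⁻ γ, (cnt γ) ^ 2 ∂μ ≤ C * (C + 1) := by
    have hm : Measurable (fun p : X × Config X =>
        Λ.indicator (1 : X → ℝ≥0∞) p.1 * cnt p.2) :=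
      ((measurable_one.indicator hΛ.1).comp measurable_fst).mul
        ((cnt_measurable Λ hΛ).comp measurable_snd)
    have hM := hMecke (fun x γ => Λ.indicator (1 : X → ℝ≥0∞) x * cnt γ) hm
    have hL : ∫⁻ γ, ∑' x : γ.1, Λ.indicator (1 : X → ℝ≥0∞) (x : X) * cnt γ ∂μ
        = ∫⁻ γ, (cnt γ) ^ 2 ∂μ := by
      refine lintegral_congr fun γ => ?_
      rw [ENNReal.tsum_mul_right, tsum_indicator_eq_cnt Λ hΛ γ, sq]
    rw [hL] at hM
    rw [hM]
    have hcntne : ∀ γ : Config X, cnt γ + 1 ≠ ⊤ := by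
      intro γ; simp [hcnt]
    calc ∫⁻ γ, ∫⁻ x, ENNReal.ofReal (r x γ) *
            (Λ.indicator (1 : X → ℝ≥0∞) x * cnt (γ.ins x)) ∂ν ∂μ
        ≤ ∫⁻ γ, ∫⁻ x, Λ.indicator (fun x => ENNReal.ofReal (j x)) x * (cnt γ + 1) ∂ν ∂μ := by
          refine lintegral_mono fun γ => lintegral_mono fun x => ?_
          rw [← mul_assoc]
          exact mul_le_mul' (hpt x γ) (cnt_ins_le Λ hΛ γ x)
      _ = ∫⁻ γ, C * (cnt γ + 1) ∂μ := by
          refine lintegral_congr fun γ => ?_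
          rw [lintegral_mul_const' _ _ (hcntne γ), hindint]
      _ = C * ∫⁻ γ, (cnt γ + 1) ∂μ := lintegral_const_mul' _ _ hC.ne
      _ ≤ C * (C + 1) := by
          refine mul_le_mul_right ?_ C
          rw [lintegral_add_right _ measurable_const, lintegral_const]
          simp only [measure_univ, mul_one]
          exact add_le_add_left hA 1
  constructor
  · refine lt_of_le_of_lt ?_ (lt_of_le_of_lt hB
      (ENNReal.mul_lt_top hC (ENNReal.add_lt_top.mpr ⟨hC, one_lt_top⟩)))
    refine lintegral_mono fun γ => ?_
    have h1 : (∑' x : ↥(γ.1 ∩ Λ),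
        (if 0 < r (x : X) (γ.erase (x : X)) then (1 : ℝ≥0∞) else 0)) ≤ cnt γ := by
      exact le_of_le_of_eq (ENNReal.tsum_le_tsum fun x => by split <;> simp)
        (tsum_one_eq_cnt Λ hΛ γ)
    exact pow_le_pow_left₀ zero_le h1 2
  · calc ∫⁻ γ, (∫⁻ x in Λ, ENNReal.ofReal (r x γ) ∂ν) ^ 2 ∂μ
        ≤ ∫⁻ γ, C ^ 2 ∂μ := by
          refine lintegral_mono fun γ => ?_
          refine pow_le_pow_left₀ zero_le ?_ 2
          exact lintegral_mono fun x => ENNReal.ofReal_le_ofReal (hrj x γ)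
      _ = C ^ 2 := by simp
      _ < ⊤ := ENNReal.pow_lt_top hC
end
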